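/- Let K be a b-complete idempotent semiring, X a set, W an admissible b-complete semimodule over K, and V ⊂ K(X) a functional ∧-semimodule. Then every b-linear operator A : V → W has an integral representation, i.e., there exists a kernel k : X → W such that {f(x) ⊙ k(x) : x ∈ X} is bounded above in W for every f ∈ V and Af = sup_{x ∈ X} f(x) ⊙ k(x) for all f ∈ V. -/

import Mathlib

/-
Common definitions: b-complete idempotent semirings, b-complete idempotent
semimodules, functional semimodules, b-linear / integral / one-dimensional /
b-nuclear maps, δ-functionals, kernel theorems.
-/

open Set

universe u v w

section Defs

variable {K : Type*} [IdemSemiring K] {X Y : Type*}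

/-- `K` is a b-complete idempotent semiring: every nonempty bounded-above subset of `K`
has a least upper bound, and multiplication on either side distributes over suprema of
nonempty bounded-above subsets. -/
structure IsBCompleteSemiring (K : Type*) [IdemSemiring K] : Prop where
  exists_lub : ∀ s : Set K, s.Nonempty → BddAbove s → ∃ a, IsLUB s a
  mul_left_lub : ∀ (c : K) (s : Set K) (a : K), s.Nonempty → IsLUB s a →
    IsLUB ((fun x => c * x) '' s) (c * a)
  mul_right_lub : ∀ (c : K) (s : Set K) (a : K), s.Nonempty → IsLUB s a →
    IsLUB ((fun x => x * c) '' s) (a * c)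

/-- `a` is the supremum of `S` computed *inside* the subset `V` of an ordered type:
`a` lies in `V`, `a` is an upper bound of `S`, and `a` is below every upper bound of `S`
that lies in `V`. -/
def IsLUBWithin {α : Type*} [Preorder α] (V S : Set α) (a : α) : Prop :=
  a ∈ V ∧ a ∈ upperBounds S ∧ ∀ b ∈ V, b ∈ upperBounds S → a ≤ b

/-- A functional semimodule on `X`: a subset of `K(X)` invariant under multiplication by
scalars from `K` which is an upper semilattice in the induced (pointwise) order; its
addition is `f ⊕ g = sup {f, g}`, the supremum being taken inside `V`. -/
structure IsFunctionalSemimodule (V : Set (X → K)) : Prop where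
  smul_mem : ∀ (c : K), ∀ f ∈ V, c • f ∈ V
  pair_lub : ∀ f ∈ V, ∀ g ∈ V, ∃ h, IsLUBWithin V {f, g} h

/-- A b-complete functional semimodule on `X`: every nonempty subset bounded above (by an
element of `V`) has a supremum in `V`; scalar multiplication by a fixed `c ∈ K` preserves
such suprema; and for fixed `f ∈ V` the map `c ↦ c • f` sends suprema of nonempty
bounded-above subsets of `K` to suprema of their images. -/
structure IsBCompleteFunctionalSemimodule (V : Set (X → K)) extends
    IsFunctionalSemimodule V : Prop where
  exists_lub : ∀ S ⊆ V, S.Nonempty → (∃ b ∈ V, b ∈ upperBounds S) → ∃ a, IsLUBWithin V S a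
  smul_lub : ∀ (c : K) (S : Set (X → K)) (a : X → K), S ⊆ V → S.Nonempty →
    IsLUBWithin V S a → IsLUBWithin V ((fun f => c • f) '' S) (c • a)
  act_lub : ∀ f ∈ V, ∀ (s : Set K) (a : K), s.Nonempty → BddAbove s → IsLUB s a →
    IsLUBWithin V ((fun c => c • f) '' s) (a • f)

/-- `V` is a b-subsemimodule of `K(X)`: the embedding `V → K(X)` preserves sums
(the sum in `V` of `f, g ∈ V`, i.e. the supremum of `{f, g}` taken inside `V`, is the
pointwise sum `f + g`) and preserves suprema of nonempty bounded-above subsets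
(suprema taken inside `V` are suprema in `K(X)`). -/
structure IsBSubsemimodule (V : Set (X → K)) : Prop where
  add_eq : ∀ f ∈ V, ∀ g ∈ V, ∀ h, IsLUBWithin V {f, g} h → h = f + g
  lub_preserved : ∀ S ⊆ V, S.Nonempty → ∀ a, IsLUBWithin V S a → IsLUB S a

/-- A functional ∧-semimodule: a functional semimodule containing the zero function and
closed under pointwise infima (computed in `K(X)`) of arbitrary nonempty subsets. -/
structure IsFunctionalWedgeSemimodule (V : Set (X → K)) extends
    IsFunctionalSemimodule V : Prop where
  zero_mem : (0 : X → K) ∈ V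
  inf_mem : ∀ S ⊆ V, S.Nonempty → ∀ g : X → K,
    (∀ x : X, IsGLB ((fun f => f x) '' S) (g x)) → g ∈ V

/-- `V ⊆ K(X)` is non-degenerate: at every point some member of `V` takes the value `1`. -/
def IsNonDegenerate (V : Set (X → K)) : Prop :=
  ∀ x : X, ∃ g ∈ V, g x = 1

/-- `V ⊆ K(X)` is admissible: for every `f ∈ V` and `x ∈ X` there is `g ∈ V` with
`g x = 1` and `f x • g ≤ f`. -/
def IsAdmissible (V : Set (X → K)) : Prop :=
  ∀ f ∈ V, ∀ x : X, ∃ g ∈ V, g x = 1 ∧ f x • g ≤ f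

/-- An (abstract) b-complete idempotent semimodule over `K`: the partial order is the
canonical one (`x ≤ y ↔ x + y = y`, which forces addition to be idempotent), every
nonempty bounded-above subset has a least upper bound, scalar multiplication by a fixed
`c ∈ K` preserves such suprema, and for fixed `w` the map `c ↦ c • w` sends suprema of
nonempty bounded-above subsets of `K` to suprema of their images. -/
structure IsBCompleteSemimodule (K W : Type*) [IdemSemiring K] [AddCommMonoid W]
    [PartialOrder W] [Module K W] : Prop where
  le_iff_add : ∀ x y : W, x ≤ y ↔ x + y = y
  exists_lub : ∀ s : Set W, s.Nonempty → BddAbove s → ∃ a, IsLUB s a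
  smul_lub : ∀ (c : K) (s : Set W) (a : W), s.Nonempty → IsLUB s a →
    IsLUB ((fun x => c • x) '' s) (c • a)
  act_lub : ∀ (w : W) (s : Set K) (a : K), s.Nonempty → BddAbove s → IsLUB s a →
    IsLUB ((fun c => c • w) '' s) (a • w)

/-- A b-linear map between (abstract) semimodules over `K`: it commutes with scalar
multiplication and sends suprema of nonempty bounded-above subsets to suprema of their
images. -/
structure IsBLinearMap (K : Type*) {V W : Type*} [IdemSemiring K]
    [AddCommMonoid V] [PartialOrder V] [Module K V]
    [AddCommMonoid W] [PartialOrder W] [Module K W] (A : V → W) : Prop where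
  map_smul : ∀ (c : K) (v : V), A (c • v) = c • A v
  map_lub : ∀ s : Set V, s.Nonempty → BddAbove s → ∀ a, IsLUB s a → IsLUB (A '' s) (A a)

/-- A one-dimensional (rank 1) map `V → W`: `v ↦ φ v • w` for a b-linear functional `φ`
and a fixed `w ∈ W`. -/
def IsOneDimMap (K : Type*) {V W : Type*} [IdemSemiring K]
    [AddCommMonoid V] [PartialOrder V] [Module K V]
    [AddCommMonoid W] [PartialOrder W] [Module K W] (g : V → W) : Prop :=
  ∃ (φ : V → K) (w : W), IsBLinearMap K φ ∧ ∀ v : V, g v = φ v • w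

/-- A b-nuclear map `V → W`: the pointwise supremum of a set `G` of one-dimensional maps
such that `{g v : g ∈ G}` is bounded above for every `v`. -/
def IsBNuclearMap (K : Type*) {V W : Type*} [IdemSemiring K]
    [AddCommMonoid V] [PartialOrder V] [Module K V]
    [AddCommMonoid W] [PartialOrder W] [Module K W] (A : V → W) : Prop :=
  ∃ G : Set (V → W), (∀ g ∈ G, IsOneDimMap K g) ∧
    ∀ v : V, BddAbove ((fun g => g v) '' G) ∧ IsLUB ((fun g => g v) '' G) (A v)

/-- A δ-functional on an (abstract) semimodule `V`: a b-linear functional `φ : V → K`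
such that `φ w • v ≤ w` for some fixed `v ∈ V` and all `w ∈ V`. -/
def IsDeltaFunctional (K : Type*) {V : Type*} [IdemSemiring K]
    [AddCommMonoid V] [PartialOrder V] [Module K V] (φ : V → K) : Prop :=
  IsBLinearMap K φ ∧ ∃ v : V, ∀ w : V, φ w • v ≤ w

/-- The set `Δ(V)` of δ-functionals on `V`, as a type. -/
def DeltaSet (K V : Type*) [IdemSemiring K]
    [AddCommMonoid V] [PartialOrder V] [Module K V] : Type _ :=
  {φ : V → K // IsDeltaFunctional K φ}

/-- The natural map `i_Δ : V → K(Δ(V))`, `(i_Δ v) φ = φ v`. -/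
def iDelta (K V : Type*) [IdemSemiring K]
    [AddCommMonoid V] [PartialOrder V] [Module K V] : V → (DeltaSet K V → K) :=
  fun v φ => φ.1 v

/-- A b-linear operator on a functional semimodule `V ⊆ K(X)` with values in an abstract
semimodule `W`: it commutes with scalar multiplication and sends suprema (taken inside
`V`) of nonempty bounded-above subsets of `V` to suprema of their images in `W`. -/
structure IsBLinearOn {K X : Type*} [IdemSemiring K] {W : Type*} [AddCommMonoid W]
    [PartialOrder W] [Module K W] (V : Set (X → K)) (A : (X → K) → W) : Prop where
  map_smul : ∀ (c : K), ∀ f ∈ V, A (c • f) = c • A f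
  map_lub : ∀ S ⊆ V, S.Nonempty → ∀ a, IsLUBWithin V S a → IsLUB (A '' S) (A a)

/-- `k : X → W` is a kernel of the operator `A` on `V ⊆ K(X)`: for every `f ∈ V` the set
`{f x • k x : x ∈ X}` is bounded above in `W` and `A f = ⊕_{x ∈ X} f x • k x`. -/
def IsKernelOf {K X : Type*} [IdemSemiring K] {W : Type*} [AddCommMonoid W]
    [PartialOrder W] [Module K W] (V : Set (X → K)) (A : (X → K) → W) (k : X → W) : Prop :=
  ∀ f ∈ V, BddAbove (Set.range fun x => f x • k x) ∧
    IsLUB (Set.range fun x => f x • k x) (A f)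

/-- `A` is an integral operator (has an integral representation): it has a kernel. -/
def IsIntegralOn {K X : Type*} [IdemSemiring K] {W : Type*} [AddCommMonoid W]
    [PartialOrder W] [Module K W] (V : Set (X → K)) (A : (X → K) → W) : Prop :=
  ∃ k : X → W, IsKernelOf V A k

/-- One-dimensional map from a functional semimodule `V ⊆ K(X)` to `W`. -/
def IsOneDimOn {K X : Type*} [IdemSemiring K] {W : Type*} [AddCommMonoid W]
    [PartialOrder W] [Module K W] (V : Set (X → K)) (g : (X → K) → W) : Prop :=
  ∃ (φ : (X → K) → K) (w : W), IsBLinearOn V φ ∧ ∀ f ∈ V, g f = φ f • w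

/-- b-nuclear map from a functional semimodule `V ⊆ K(X)` to `W`: the (pointwise on `V`)
supremum of a set of one-dimensional maps, bounded above at every `f ∈ V`. -/
def IsBNuclearOn {K X : Type*} [IdemSemiring K] {W : Type*} [AddCommMonoid W]
    [PartialOrder W] [Module K W] (V : Set (X → K)) (A : (X → K) → W) : Prop :=
  ∃ G : Set ((X → K) → W), (∀ g ∈ G, IsOneDimOn V g) ∧
    ∀ f ∈ V, BddAbove ((fun g => g f) '' G) ∧ IsLUB ((fun g => g f) '' G) (A f)

/-- One-dimensional operator from the functional semimodule `V ⊆ K(X)` to itself. -/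
def IsOneDimSelf {K X : Type*} [IdemSemiring K] (V : Set (X → K))
    (g : (X → K) → (X → K)) : Prop :=
  ∃ (φ : (X → K) → K) (w : X → K), IsBLinearOn V φ ∧ w ∈ V ∧ ∀ f ∈ V, g f = φ f • w

/-- b-nuclear operator from the functional semimodule `V ⊆ K(X)` to itself (the suprema
being taken inside `V`). -/
def IsBNuclearSelf {K X : Type*} [IdemSemiring K] (V : Set (X → K))
    (A : (X → K) → (X → K)) : Prop :=
  ∃ G : Set ((X → K) → (X → K)), (∀ g ∈ G, IsOneDimSelf V g) ∧
    ∀ f ∈ V, IsLUBWithin V ((fun g => g f) '' G) (A f)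

/-- Integral operator from the functional semimodule `V ⊆ K(X)` to itself: it has a
kernel `k : X → V`, the suprema being taken inside `V`. -/
def IsIntegralSelf {K X : Type*} [IdemSemiring K] (V : Set (X → K))
    (A : (X → K) → (X → K)) : Prop :=
  ∃ k : X → (X → K), (∀ x : X, k x ∈ V) ∧
    ∀ f ∈ V, IsLUBWithin V (Set.range fun x => f x • k x) (A f)

/-- The kernel theorem holds in `V ⊆ K(X)`: every b-linear map from `V` to an arbitrary
b-complete semimodule over `K` has an integral representation. -/
def KernelTheoremHolds {K X : Type*} [IdemSemiring K] (V : Set (X → K)) : Prop :=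
  ∀ (W : Type w) [AddCommMonoid W] [PartialOrder W] [Module K W],
    IsBCompleteSemimodule K W → ∀ A : (X → K) → W, IsBLinearOn V A → IsIntegralOn V A

/-- A b-linear operator between functional semimodules `V ⊆ K(X)` and `W ⊆ K(Y)`. -/
structure IsBLinearBetween (V : Set (X → K)) (W : Set (Y → K))
    (A : (X → K) → (Y → K)) : Prop where
  maps_to : ∀ f ∈ V, A f ∈ W
  map_smul : ∀ (c : K), ∀ f ∈ V, A (c • f) = c • A f
  map_lub : ∀ S ⊆ V, S.Nonempty → ∀ a, IsLUBWithin V S a → IsLUBWithin W (A '' S) (A a)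

/-- δ-functionals on a functional semimodule `V ⊆ K(X)`. -/
def IsDeltaOn {K X : Type*} [IdemSemiring K] (V : Set (X → K)) (φ : (X → K) → K) : Prop :=
  IsBLinearOn V φ ∧ ∃ v ∈ V, ∀ w ∈ V, φ w • v ≤ w

/-- The set `Δ(V)` of δ-functionals on the functional semimodule `V ⊆ K(X)`, as a type. -/
def DeltaOn {K X : Type*} [IdemSemiring K] (V : Set (X → K)) : Type _ :=
  {φ : (X → K) → K // IsDeltaOn V φ}

/-- The natural map `i_Δ : V → K(Δ(V))` for a functional semimodule `V ⊆ K(X)`. -/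
def iDeltaOn {K X : Type*} [IdemSemiring K] (V : Set (X → K)) :
    (X → K) → (DeltaOn V → K) :=
  fun f φ => φ.1 f

end Defs

/-- **Theorem 1.** Let `K` be a b-complete idempotent semiring, `X` a set, `W` an
admissible b-complete semimodule over `K` and `V ⊆ K(X)` a functional ∧-semimodule
(admissibility being the property of the functional semimodule `V`: for every `f ∈ V`
and `x ∈ X` there is `g ∈ V` with `g x = 1` and `f x • g ≤ f`). Then every b-linear
operator `A : V → W` has an integral representation: there is a kernel `k : X → W` such
that `{f x • k x : x ∈ X}` is bounded above in `W` for every `f ∈ V` and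
`A f = ⊕_{x ∈ X} f x • k x` for all `f ∈ V`. -/
theorem bLinear_integral_representation {K : Type*} [IdemSemiring K] {X : Type*}
    (hK : IsBCompleteSemiring K)
    {W : Type*} [AddCommMonoid W] [PartialOrder W] [Module K W]
    (hW : IsBCompleteSemimodule K W)
    (V : Set (X → K)) (hV : IsFunctionalWedgeSemimodule V) (hadm : IsAdmissible V)
    (A : (X → K) → W) (hA : IsBLinearOn V A) :
    ∃ k : X → W, ∀ f ∈ V, BddAbove (Set.range fun x => f x • k x) ∧
      IsLUB (Set.range fun x => f x • k x) (A f) := by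
  classical
  rcases isEmpty_or_nonempty X with hX | hX
  · -- X empty: A f = 0 and the range is empty
    refine ⟨fun _ => 0, fun f hf => ?_⟩
    have hr : (Set.range fun x : X => f x • (0 : W)) = ∅ := Set.range_eq_empty _
    have hf0 : f = (0 : K) • f := funext fun x => hX.elim x
    have hA0 : A f = 0 := by
      conv_lhs => rw [hf0]
      rw [hA.map_smul 0 f hf, zero_smul]
    rw [hr, hA0]
    refine ⟨⟨0, fun w hw => hw.elim⟩, fun w hw => hw.elim, fun w hw => ?_⟩
    exact (hW.le_iff_add 0 w).mpr (zero_add w)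
  · -- infima exist in K
    have hglb : ∀ s : Set K, s.Nonempty → ∃ a, IsGLB s a := by
      intro s hs
      obtain ⟨t, ht⟩ := hs
      have hne : (lowerBounds s).Nonempty := ⟨0, fun b _ => zero_le⟩
      have hbdd : BddAbove (lowerBounds s) := ⟨t, fun l hl => hl ht⟩
      obtain ⟨a, ha⟩ := hK.exists_lub _ hne hbdd
      refine ⟨a, fun u hu => ha.2 fun l hl => hl hu, fun l hl => ha.1 hl⟩
    -- the set of functions equal to 1 at x
    set S : X → Set (X → K) := fun x => {g | g ∈ V ∧ g x = 1} with hS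
    have hSne : ∀ x, (S x).Nonempty := by
      intro x
      obtain ⟨g, hg, hg1, _⟩ := hadm 0 hV.zero_mem x
      exact ⟨g, hg, hg1⟩
    -- pointwise infimum e x of S x
    have hex : ∀ x x', ∃ a, IsGLB ((fun g => g x') '' S x) a := fun x x' =>
      hglb _ ((hSne x).image _)
    choose e he using hex
    have heV : ∀ x, e x ∈ V :=
      fun x => hV.inf_mem (S x) (fun g hg => hg.1) (hSne x) (e x) (he x)
    have hele : ∀ x, ∀ g ∈ S x, e x ≤ g := fun x g hg x' => (he x x').1 ⟨g, hg, rfl⟩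
    have hex1 : ∀ x, e x x = 1 := by
      intro x
      have himg : (fun g => g x) '' S x = {1} := by
        apply Set.eq_singleton_iff_nonempty_unique_mem.2
        exact ⟨(hSne x).image _, by rintro _ ⟨g, hg, rfl⟩; exact hg.2⟩
      have := he x x
      rw [himg] at this
      exact this.unique isGLB_singleton
    refine ⟨fun x => A (e x), fun f hf => ?_⟩
    -- f x • e x ≤ f
    have hkey : ∀ x, f x • e x ≤ f := by
      intro x
      obtain ⟨g, hg, hg1, hfg⟩ := hadm f hf x
      refine le_trans (fun x' => ?_) hfg
      exact mul_le_mul_right (hele x g ⟨hg, hg1⟩ x') (f x)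
    -- f is the sup inside V of {f x • e x}
    have hlubw : IsLUBWithin V (Set.range fun x => f x • e x) f := by
      refine ⟨hf, ?_, ?_⟩
      · rintro _ ⟨x, rfl⟩; exact hkey x
      · intro h hhV hub x
        have := hub ⟨x, rfl⟩ x
        simpa [hex1 x] using this
    have hsub : (Set.range fun x => f x • e x) ⊆ V := by
      rintro _ ⟨x, rfl⟩; exact hV.smul_mem _ _ (heV x)
    have hlub := hA.map_lub _ hsub (Set.range_nonempty _) f hlubw
    have himg : A '' (Set.range fun x => f x • e x)
        = Set.range fun x => f x • A (e x) := by
      rw [← Set.range_comp]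
      exact congrArg Set.range (funext fun x => hA.map_smul (f x) (e x) (heV x))
    rw [himg] at hlub
    exact ⟨⟨A f, hlub.1⟩, hlub⟩
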